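/- Two-parameter equality for the homology of the union: Let g be a one-critical 2-parameter filtration of a finite cell complex X over a field F (n = 2). Then for every grade u ∈ ℤ^2 and every integer q ≥ 0, dim_F H_q(X^{u−e_1} ∪ X^{u−e_2}) = dim_F H_q(X^u) − ξ_0^q(u) + ξ_1^q(u) + ξ_2^{q−1}(u). -/

import Mathlib

noncomputable section

open scoped Classical

section Hquot

variable {F : Type} [Field F] {A B C A' B' C' : Type}
  [AddCommGroup A] [AddCommGroup B] [AddCommGroup C]
  [AddCommGroup A'] [AddCommGroup B'] [AddCommGroup C']
  [Module F A] [Module F B] [Module F C]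
  [Module F A'] [Module F B'] [Module F C']

/-- The homology `ker dout / im din` of a pair of composable maps
`C --din--> B --dout--> A` (implemented as `ker dout / (ker dout ∩ im din)`,
which agrees with it when `im din ⊆ ker dout`). -/
abbrev Hquot (dout : B →ₗ[F] A) (din : C →ₗ[F] B) : Type :=
  ↥(LinearMap.ker dout) ⧸
    Submodule.comap (LinearMap.ker dout).subtype (LinearMap.range din)

/-- The map induced on homology by a map `f` commuting with the differentials. -/
noncomputable def HquotMap (dout : B →ₗ[F] A) (din : C →ₗ[F] B)
    (dout' : B' →ₗ[F] A') (din' : C' →ₗ[F] B') (f : B →ₗ[F] B')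
    (h1 : ∀ x : B, dout x = 0 → dout' (f x) = 0)
    (h2 : ∀ c : C, ∃ c' : C', f (din c) = din' c') :
    Hquot dout din →ₗ[F] Hquot dout' din' := by
  refine Submodule.liftQ _ ((Submodule.mkQ _).comp
    (f.restrict (p := LinearMap.ker dout) (q := LinearMap.ker dout')
      (fun x hx => by
        simp only [LinearMap.mem_ker] at hx ⊢
        exact h1 x hx))) ?_
  intro x hx
  simp only [Submodule.mem_comap, LinearMap.mem_range] at hx
  obtain ⟨c, hc⟩ := hx
  obtain ⟨c', hc'⟩ := h2 c
  simp only [LinearMap.mem_ker, LinearMap.coe_comp, Function.comp_apply, Submodule.mkQ_apply]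
  rw [Submodule.Quotient.mk_eq_zero]
  simp only [Submodule.mem_comap, LinearMap.mem_range, Submodule.coe_subtype,
    LinearMap.restrict_apply]
  exact ⟨c', by rw [← hc', hc]; rfl⟩

end Hquot

/-- A finite cell complex over a field `F`. -/
structure CellComplex (F : Type) [Field F] where
  cell : Type
  [cellFintype : Fintype cell]
  dim : cell → ℕ
  κ : cell → cell → F
  dim_incidence : ∀ τ σ : cell, κ τ σ ≠ 0 → dim τ = dim σ + 1
  incidence_comp : ∀ τ σ : cell, ∑ ρ : cell, κ τ ρ * κ ρ σ = 0

attribute [instance] CellComplex.cellFintype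

/-- `j`-th standard basis vector of `ℤⁿ`. -/
def eb {n : ℕ} (j : Fin n) : Fin n → ℤ := fun i => if i = j then 1 else 0

/-- `e_σ = ∑_{j ∈ σ} e_j`. -/
def eS {n : ℕ} (s : Finset (Fin n)) : Fin n → ℤ := ∑ j ∈ s, eb j

theorem eb_nonneg {n : ℕ} (j : Fin n) (i : Fin n) : (0 : ℤ) ≤ eb j i := by
  by_cases h : i = j <;> simp [eb, h]

theorem eS_le_insert {n : ℕ} (j : Fin n) (s : Finset (Fin n)) : eS s ≤ eS (insert j s) := by
  classical
  by_cases h : j ∈ s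
  · rw [Finset.insert_eq_self.2 h]
  · rw [eS, eS, Finset.sum_insert h]
    intro i
    have h0 : (0 : ℤ) ≤ eb j i := eb_nonneg j i
    simp only [Pi.add_apply]
    omega

namespace CellComplex

variable {F : Type} [Field F] (X : CellComplex F)

/-- The `k`-dimensional cells lying in a subset `S`. -/
def cells (S : Set X.cell) (k : ℤ) : Type :=
  {c : X.cell // (X.dim c : ℤ) = k ∧ c ∈ S}

instance (S : Set X.cell) (k : ℤ) : Fintype (X.cells S k) := by
  unfold cells; exact Fintype.ofFinite _

/-- The space of `k`-chains supported on `S`. -/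
abbrev Cz (S : Set X.cell) (k : ℤ) : Type := X.cells S k → F

/-- The boundary operator (from degree `a` to degree `b`) of the chain complex on `S`. -/
noncomputable def D (S : Set X.cell) (a b : ℤ) : X.Cz S a →ₗ[F] X.Cz S b where
  toFun f := fun σ => ∑ τ : X.cells S a, X.κ τ.1 σ.1 * f τ
  map_add' f g := by
    funext σ
    simp only [Pi.add_apply, mul_add]
    rw [Finset.sum_add_distrib]
  map_smul' r f := by
    funext σ
    simp only [Pi.smul_apply, smul_eq_mul, RingHom.id_apply]
    rw [Finset.mul_sum]
    exact Finset.sum_congr rfl fun τ _ => by ring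

@[simp] theorem D_apply (S : Set X.cell) (a b : ℤ) (f : X.Cz S a) (σ : X.cells S b) :
    X.D S a b f σ = ∑ τ : X.cells S a, X.κ τ.1 σ.1 * f τ := rfl

/-- Extension by zero of chains on `S` to chains on `T ⊇ S`. -/
noncomputable def inclC (S T : Set X.cell) (hST : S ⊆ T) (k : ℤ) :
    X.Cz S k →ₗ[F] X.Cz T k where
  toFun f := fun σ => if hs : σ.1 ∈ S then f ⟨σ.1, ⟨σ.2.1, hs⟩⟩ else 0
  map_add' f g := by
    funext σ
    by_cases hs : σ.1 ∈ S <;> simp [hs] <;> rfl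
  map_smul' r f := by
    funext σ
    by_cases hs : σ.1 ∈ S <;> simp [hs] <;> rfl

@[simp] theorem inclC_apply (S T : Set X.cell) (hST : S ⊆ T) (k : ℤ) (f : X.Cz S k)
    (σ : X.cells T k) :
    X.inclC S T hST k f σ = if hs : σ.1 ∈ S then f ⟨σ.1, ⟨σ.2.1, hs⟩⟩ else 0 := rfl

theorem sum_cells_eq (S : Set X.cell) (a : ℤ) (G : X.cell → F)
    (hG : ∀ c : X.cell, ¬((X.dim c : ℤ) = a ∧ c ∈ S) → G c = 0) :
    (∑ τ : X.cells S a, G τ.1) = ∑ c : X.cell, G c := by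
  classical
  have h1 : (∑ c ∈ Finset.univ.filter (fun c => (X.dim c : ℤ) = a ∧ c ∈ S), G c)
      = ∑ c : X.cell, G c :=
    Finset.sum_filter_of_ne (fun c _ hc => by_contra fun h => hc (hG c h))
  rw [← h1]
  exact (Finset.sum_subtype _ (fun c => by simp) G).symm

theorem incl_comm_apply (S T : Set X.cell) (hST : S ⊆ T)
    (hS : ∀ τ σ : X.cell, τ ∈ S → X.κ τ σ ≠ 0 → σ ∈ S)
    (a b : ℤ) (f : X.Cz S a) (σ : X.cells T b) :
    X.D T a b (X.inclC S T hST a f) σ = X.inclC S T hST b (X.D S a b f) σ := by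
  classical
  by_cases hσ : σ.1 ∈ S
  · rw [D_apply, inclC_apply, dif_pos hσ]
    calc (∑ τ : X.cells T a, X.κ τ.1 σ.1 * (X.inclC S T hST a f) τ)
        = ∑ τ : X.cells T a,
            (if hc : (X.dim τ.1 : ℤ) = a ∧ τ.1 ∈ S then X.κ τ.1 σ.1 * f ⟨τ.1, hc⟩ else 0) := by
          refine Finset.sum_congr rfl fun τ _ => ?_
          rw [inclC_apply]
          by_cases hτ : τ.1 ∈ S
          · rw [dif_pos hτ, dif_pos ⟨τ.2.1, hτ⟩]
          · rw [dif_neg hτ, mul_zero, dif_neg (fun h => hτ h.2)]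
      _ = ∑ c : X.cell,
            (if hc : (X.dim c : ℤ) = a ∧ c ∈ S then X.κ c σ.1 * f ⟨c, hc⟩ else 0) :=
          X.sum_cells_eq T a
            (fun c => if hc : (X.dim c : ℤ) = a ∧ c ∈ S then X.κ c σ.1 * f ⟨c, hc⟩ else 0)
            (fun c hc => dif_neg (fun h => hc ⟨h.1, hST h.2⟩))
      _ = ∑ τ : X.cells S a,
            (if hc : (X.dim τ.1 : ℤ) = a ∧ τ.1 ∈ S then X.κ τ.1 σ.1 * f ⟨τ.1, hc⟩ else 0) :=
          (X.sum_cells_eq S a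
            (fun c => if hc : (X.dim c : ℤ) = a ∧ c ∈ S then X.κ c σ.1 * f ⟨c, hc⟩ else 0)
            (fun c hc => dif_neg hc)).symm
      _ = ∑ τ : X.cells S a, X.κ τ.1 σ.1 * f τ := by
          refine Finset.sum_congr rfl fun τ _ => ?_
          rw [dif_pos ⟨τ.2.1, τ.2.2⟩]
          rfl
  · rw [D_apply, inclC_apply, dif_neg hσ]
    refine Finset.sum_eq_zero fun τ _ => ?_
    rw [inclC_apply]
    by_cases hτ : τ.1 ∈ S
    · rw [dif_pos hτ]
      rcases eq_or_ne (X.κ τ.1 σ.1) 0 with h | h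
      · rw [h, zero_mul]
      · exact absurd (hS τ.1 σ.1 hτ h) hσ
    · rw [dif_neg hτ, mul_zero]

/-- The `q`-th homology of (the chain complex on) `S`. -/
abbrev Hsp (S : Set X.cell) (q : ℤ) : Type :=
  Hquot (X.D S q (q - 1)) (X.D S (q + 1) q)

/-- The dimension of the `q`-th homology of `S`. -/
noncomputable def Hd (S : Set X.cell) (q : ℤ) : ℕ := Module.finrank F (X.Hsp S q)

/-- The map induced on homology by an inclusion `S ⊆ T` of face-closed subsets. -/
noncomputable def Hmap (S T : Set X.cell) (hST : S ⊆ T)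
    (hS : ∀ τ σ : X.cell, τ ∈ S → X.κ τ σ ≠ 0 → σ ∈ S) (q : ℤ) :
    X.Hsp S q →ₗ[F] X.Hsp T q :=
  HquotMap _ _ _ _ (X.inclC S T hST q)
    (fun x hx => by
      funext σ
      rw [X.incl_comm_apply S T hST hS q (q - 1) x σ, hx]
      simp
      intro _
      rfl)
    (fun c => ⟨X.inclC S T hST (q + 1) c, by
      funext σ
      exact (X.incl_comm_apply S T hST hS (q + 1) q c σ).symm⟩)


/-! ### Multi-parameter filtrations -/

variable {n : ℕ}

/-- The subcomplex at grade `u` of the filtration with entrance-grade function `g`. -/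
def Xset (g : X.cell → Fin n → ℤ) (u : Fin n → ℤ) : Set X.cell := {c | g c ≤ u}

theorem Xset_mono (g : X.cell → Fin n → ℤ) {u v : Fin n → ℤ} (huv : u ≤ v) :
    X.Xset g u ⊆ X.Xset g v := fun _ hc => le_trans hc huv

theorem Xset_faceClosed (g : X.cell → Fin n → ℤ)
    (hg : ∀ τ σ : X.cell, X.κ τ σ ≠ 0 → g σ ≤ g τ) (u : Fin n → ℤ) :
    ∀ τ σ : X.cell, τ ∈ X.Xset g u → X.κ τ σ ≠ 0 → σ ∈ X.Xset g u :=
  fun τ σ hτ hκ => le_trans (hg τ σ hκ) hτ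

/-- The union `∪_j X^{u-e_j}`. -/
def Uset (g : X.cell → Fin n → ℤ) (u : Fin n → ℤ) : Set X.cell :=
  ⋃ j : Fin n, X.Xset g (u - eb j)

/-- `c_q(u) = dim H_q(X^u, ∪_j X^{u-e_j})`, the homology of the quotient chain complex,
i.e. of the chain complex spanned by the cells entering the filtration at grade `u`. -/
noncomputable def ccount (g : X.cell → Fin n → ℤ) (q : ℤ) (u : Fin n → ℤ) : ℕ :=
  X.Hd (X.Xset g u \ X.Uset g u) q

theorem Uset_subset_Xset (g : X.cell → Fin n → ℤ) (u : Fin n → ℤ) :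
    X.Uset g u ⊆ X.Xset g u := by
  intro c hc
  rcases Set.mem_iUnion.1 hc with ⟨j, hj⟩
  have hj' : g c ≤ u - eb j := hj
  show g c ≤ u
  refine le_trans hj' ?_
  intro i
  have h0 : (0 : ℤ) ≤ eb j i := eb_nonneg j i
  simp only [Pi.sub_apply]
  omega

theorem Uset_faceClosed (g : X.cell → Fin n → ℤ)
    (hg : ∀ τ σ : X.cell, X.κ τ σ ≠ 0 → g σ ≤ g τ) (u : Fin n → ℤ) :
    ∀ τ σ : X.cell, τ ∈ X.Uset g u → X.κ τ σ ≠ 0 → σ ∈ X.Uset g u := by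
  intro τ σ hτ hκ
  rcases Set.mem_iUnion.1 hτ with ⟨j, hj⟩
  exact Set.mem_iUnion.2 ⟨j, X.Xset_faceClosed g hg _ τ σ hj hκ⟩

/-- Degree-`i` part `⊕_{|σ|=i} H_q(X^{u-e_σ})` of the Koszul complex of the `q`-th
persistent homology module at grade `u`. -/
abbrev Ksp (g : X.cell → Fin n → ℤ) (q : ℤ) (u : Fin n → ℤ) (i : ℤ) : Type :=
  ∀ s : {s : Finset (Fin n) // (s.card : ℤ) = i},
    X.Hsp (X.Xset g (u - eS s.1)) q

set_option maxHeartbeats 1000000 in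
/-- The Koszul differential (from degree `a` to degree `b`). -/
noncomputable def KD (g : X.cell → Fin n → ℤ)
    (hg : ∀ τ σ : X.cell, X.κ τ σ ≠ 0 → g σ ≤ g τ) (q : ℤ) (u : Fin n → ℤ) (a b : ℤ) :
    X.Ksp g q u a →ₗ[F] X.Ksp g q u b where
  toFun f := fun t => ∑ j ∈ t.1ᶜ,
    ((-1 : F) ^ (t.1.filter (fun k => j < k)).card) •
      (if h : ((insert j t.1).card : ℤ) = a then
        X.Hmap (X.Xset g (u - eS (insert j t.1))) (X.Xset g (u - eS t.1))
          (X.Xset_mono g (sub_le_sub_left (eS_le_insert j t.1) u))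
          (X.Xset_faceClosed g hg _) q (f ⟨insert j t.1, h⟩)
      else 0)
  map_add' f f' := by
    funext t
    simp only [Pi.add_apply]
    rw [← Finset.sum_add_distrib]
    refine Finset.sum_congr rfl fun j hj => ?_
    by_cases h : ((insert j t.1).card : ℤ) = a
    · simp only [dif_pos h, Pi.add_apply, map_add, smul_add]
    · simp only [dif_neg h, smul_zero, add_zero]
  map_smul' r f := by
    funext t
    simp only [Pi.smul_apply, RingHom.id_apply]
    rw [Finset.smul_sum]
    refine Finset.sum_congr rfl fun j hj => ?_
    by_cases h : ((insert j t.1).card : ℤ) = a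
    · simp only [dif_pos h, Pi.smul_apply, map_smul]
      rw [smul_comm]
    · simp only [dif_neg h, smul_zero]


set_option maxHeartbeats 1000000 in
/-- The Betti table `ξ_p^q(u)`: the dimension of the degree-`p` homology of the Koszul
complex of the `q`-th persistent homology module at grade `u` (zero when `q < 0`). -/
noncomputable def xi (g : X.cell → Fin n → ℤ)
    (hg : ∀ τ σ : X.cell, X.κ τ σ ≠ 0 → g σ ≤ g τ) (p : ℕ) (q : ℤ) (u : Fin n → ℤ) : ℕ :=
  Module.finrank F
    (Hquot (X.KD g hg q u (p : ℤ) ((p : ℤ) - 1)) (X.KD g hg q u ((p : ℤ) + 1) (p : ℤ)))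

/-- The map `i_q^u : H_q(∪_j X^{u-e_j}) → H_q(X^u)` induced by the inclusion. -/
noncomputable def imap (g : X.cell → Fin n → ℤ)
    (hg : ∀ τ σ : X.cell, X.κ τ σ ≠ 0 → g σ ≤ g τ) (u : Fin n → ℤ) (q : ℤ) :
    X.Hsp (X.Uset g u) q →ₗ[F] X.Hsp (X.Xset g u) q :=
  X.Hmap _ _ (X.Uset_subset_Xset g u) (X.Uset_faceClosed g hg u) q

/-- The map `ε̄_q^u : ⊕_j H_q(X^{u-e_j}) → H_q(∪_j X^{u-e_j})` whose restriction to each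
summand is induced by the corresponding inclusion. -/
noncomputable def epsmap (g : X.cell → Fin n → ℤ)
    (hg : ∀ τ σ : X.cell, X.κ τ σ ≠ 0 → g σ ≤ g τ) (u : Fin n → ℤ) (q : ℤ) :
    (∀ j : Fin n, X.Hsp (X.Xset g (u - eb j)) q) →ₗ[F] X.Hsp (X.Uset g u) q :=
  ∑ j : Fin n, (X.Hmap (X.Xset g (u - eb j)) (X.Uset g u)
      (Set.subset_iUnion (fun j => X.Xset g (u - eb j)) j)
      (X.Xset_faceClosed g hg _) q).comp (LinearMap.proj j)

end CellComplex

/-! ### Auxiliary material for the proof -/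

section Aux0

variable {F : Type} [Field F] {A B C : Type}
  [AddCommGroup A] [AddCommGroup B] [AddCommGroup C]
  [Module F A] [Module F B] [Module F C]

open Module

theorem comap_subtype_eq_inf (p q : Submodule F B) :
    Submodule.comap q.subtype p = Submodule.comap q.subtype (p ⊓ q) := by
  ext x
  simp only [Submodule.mem_comap, Submodule.mem_inf, Submodule.coe_subtype]
  exact ⟨fun h => ⟨h, x.2⟩, fun h => h.1⟩

theorem finrank_comap_subtype (p q : Submodule F B) :
    finrank F (Submodule.comap q.subtype p) = finrank F ↥(p ⊓ q) := by
  rw [comap_subtype_eq_inf]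
  exact LinearEquiv.finrank_eq (Submodule.comapSubtypeEquivOfLe inf_le_right)

theorem finrank_hquot [FiniteDimensional F B] (dout : B →ₗ[F] A) (din : C →ₗ[F] B) :
    finrank F (Hquot dout din)
      + finrank F ↥(LinearMap.range din ⊓ LinearMap.ker dout)
      = finrank F ↥(LinearMap.ker dout) := by
  have := Submodule.finrank_quotient_add_finrank
    (Submodule.comap (LinearMap.ker dout).subtype (LinearMap.range din))
  rw [finrank_comap_subtype] at this
  exact this

/-- rank–nullity for the restriction of a map to a submodule. -/
theorem finrank_map_add_finrank_inf_ker [FiniteDimensional F B]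
    (f : B →ₗ[F] A) (p : Submodule F B) :
    finrank F ↥(Submodule.map f p) + finrank F ↥(p ⊓ LinearMap.ker f)
      = finrank F ↥p := by
  have h := LinearMap.finrank_range_add_finrank_ker (f.domRestrict p)
  rw [LinearMap.range_domRestrict] at h
  have hker : LinearMap.ker (f.domRestrict p)
      = Submodule.comap p.subtype (LinearMap.ker f) := by
    ext x; simp [LinearMap.mem_ker]
  rw [hker, finrank_comap_subtype, inf_comm] at h
  exact h

theorem finrank_map_of_injective [FiniteDimensional F B]
    (f : B →ₗ[F] A) (hf : Function.Injective f) (p : Submodule F B) :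
    finrank F ↥(Submodule.map f p) = finrank F ↥p :=
  (LinearEquiv.finrank_eq (Submodule.equivMapOfInjective f hf p)).symm

theorem finrank_hquot_ker_top [FiniteDimensional F B] [Subsingleton A]
    (dout : B →ₗ[F] A) (din : C →ₗ[F] B) :
    finrank F (Hquot dout din) + finrank F ↥(LinearMap.range din) = finrank F B := by
  have hker : LinearMap.ker dout = ⊤ := by
    ext x
    simp only [LinearMap.mem_ker, Submodule.mem_top, iff_true]
    exact Subsingleton.elim _ _
  have h := finrank_hquot dout din
  have h2 : finrank F ↥(LinearMap.range din ⊓ LinearMap.ker dout)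
      = finrank F ↥(LinearMap.range din) := by rw [hker, inf_top_eq]
  have h3 : finrank F ↥(LinearMap.ker dout) = finrank F B := by
    rw [hker]
    exact finrank_top F B
  rw [← h2, ← h3]
  exact h

theorem finrank_hquot_range_bot [FiniteDimensional F B] [Subsingleton C]
    (dout : B →ₗ[F] A) (din : C →ₗ[F] B) :
    finrank F (Hquot dout din) = finrank F ↥(LinearMap.ker dout) := by
  have hrange : LinearMap.range din = ⊥ := by
    ext x
    simp only [LinearMap.mem_range, Submodule.mem_bot]
    constructor
    · rintro ⟨c, rfl⟩
      rw [Subsingleton.elim c 0, map_zero]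
    · rintro rfl
      exact ⟨0, map_zero _⟩
  have h := finrank_hquot dout din
  have h2 : finrank F ↥(LinearMap.range din ⊓ LinearMap.ker dout) = 0 := by
    rw [hrange, bot_inf_eq]
    exact finrank_bot F B
  rw [h2, add_zero] at h
  exact h

end Aux0

namespace CellComplex

variable {F : Type} [Field F] (X : CellComplex F)

open Module

instance (S : Set X.cell) (k : ℤ) : FiniteDimensional F (X.Cz S k) :=
  inferInstanceAs (FiniteDimensional F (X.cells S k → F))

theorem inclC_injective (S T : Set X.cell) (hST : S ⊆ T) (k : ℤ) :
    Function.Injective (X.inclC S T hST k) := by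
  intro f g h
  funext σ
  have := congrFun h ⟨σ.1, ⟨σ.2.1, hST σ.2.2⟩⟩
  have e : ∀ f' : X.Cz S k, X.inclC S T hST k f' ⟨σ.1, ⟨σ.2.1, hST σ.2.2⟩⟩ = f' σ :=
    fun f' => dif_pos σ.2.2
  rw [e, e] at this
  exact this

theorem inclC_comp_apply (R S T : Set X.cell) (hRS : R ⊆ S) (hST : S ⊆ T) (k : ℤ)
    (f : X.Cz R k) :
    X.inclC S T hST k (X.inclC R S hRS k f) = X.inclC R T (hRS.trans hST) k f := by
  funext σ
  by_cases hR : σ.1 ∈ R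
  · simp [inclC_apply, hRS hR, hR]
    exact dif_pos hR
  · by_cases hS : σ.1 ∈ S <;> simp [inclC_apply, hR, hS] <;> exact dif_neg hR

theorem inclC_self (S : Set X.cell) (hSS : S ⊆ S) (k : ℤ) (f : X.Cz S k) :
    X.inclC S S hSS k f = f := by
  funext σ
  simp [inclC_apply, σ.2.2]
  rfl

/-- `∂ ∘ ∂ = 0` on a face-closed subset. -/
theorem DD (S : Set X.cell)
    (hS : ∀ τ σ : X.cell, τ ∈ S → X.κ τ σ ≠ 0 → σ ∈ S)
    (a b c : ℤ) (hac : a = c - 1) (f : X.Cz S c) :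
    X.D S a b (X.D S c a f) = 0 := by
  funext σ
  rw [D_apply]
  calc (∑ τ : X.cells S a, X.κ τ.1 σ.1 * (X.D S c a f) τ)
      = ∑ τ : X.cells S a, ∑ ρ : X.cells S c, X.κ ρ.1 τ.1 * X.κ τ.1 σ.1 * f ρ := by
        refine Finset.sum_congr rfl fun τ _ => ?_
        rw [D_apply, Finset.mul_sum]
        exact Finset.sum_congr rfl fun ρ _ => by ring
    _ = ∑ ρ : X.cells S c, ∑ τ : X.cells S a, X.κ ρ.1 τ.1 * X.κ τ.1 σ.1 * f ρ :=
        Finset.sum_comm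
    _ = 0 := by
        refine Finset.sum_eq_zero fun ρ _ => ?_
        rw [← Finset.sum_mul]
        have h1 : (∑ τ : X.cells S a, X.κ ρ.1 τ.1 * X.κ τ.1 σ.1)
            = ∑ c : X.cell, X.κ ρ.1 c * X.κ c σ.1 := by
          refine X.sum_cells_eq S a (fun c => X.κ ρ.1 c * X.κ c σ.1) fun c hc => ?_
          rcases eq_or_ne (X.κ ρ.1 c) 0 with h | h
          · simp only [h, zero_mul]
          · exfalso
            refine hc ⟨?_, hS ρ.1 c ρ.2.2 h⟩
            have hd := X.dim_incidence ρ.1 c h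
            have hρ := ρ.2.1
            omega
        rw [h1, X.incidence_comp, zero_mul]

variable (Ω : Set X.cell)

/-- Chains supported on `S`, as a submodule of the chains on the ambient set `Ω`. -/
def suppSub (S : Set X.cell) (k : ℤ) : Submodule F (X.Cz Ω k) where
  carrier := {f | ∀ σ : X.cells Ω k, σ.1 ∉ S → f σ = 0}
  add_mem' := fun hf hg σ hσ => by simp [hf σ hσ, hg σ hσ]
  zero_mem' := fun σ _ => rfl
  smul_mem' := fun r f hf σ hσ => by simp [hf σ hσ]

theorem mem_suppSub {S : Set X.cell} {k : ℤ} {f : X.Cz Ω k} :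
    f ∈ X.suppSub Ω S k ↔ ∀ σ : X.cells Ω k, σ.1 ∉ S → f σ = 0 := Iff.rfl

theorem suppSub_mono {S T : Set X.cell} (h : S ⊆ T) (k : ℤ) :
    X.suppSub Ω S k ≤ X.suppSub Ω T k :=
  fun f hf σ hσ => hf σ (fun hs => hσ (h hs))

theorem range_inclC (S : Set X.cell) (hSΩ : S ⊆ Ω) (k : ℤ) :
    LinearMap.range (X.inclC S Ω hSΩ k) = X.suppSub Ω S k := by
  ext f
  constructor
  · rintro ⟨g, rfl⟩ σ hσ
    simp [inclC_apply, hσ]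
  · intro hf
    refine ⟨fun σ => f ⟨σ.1, ⟨σ.2.1, hSΩ σ.2.2⟩⟩, ?_⟩
    funext σ
    by_cases hσ : σ.1 ∈ S
    · simp only [inclC_apply, dif_pos hσ]
      exact congrArg f (Subtype.ext rfl)
    · simp only [inclC_apply, dif_neg hσ]
      exact (hf σ hσ).symm

theorem suppSub_inf (S T : Set X.cell) (k : ℤ) :
    X.suppSub Ω S k ⊓ X.suppSub Ω T k = X.suppSub Ω (S ∩ T) k := by
  ext f
  simp only [Submodule.mem_inf, mem_suppSub]
  constructor
  · rintro ⟨h1, h2⟩ σ hσ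
    rcases Classical.em (σ.1 ∈ S) with h | h
    · exact h2 σ (fun ht => hσ ⟨h, ht⟩)
    · exact h1 σ h
  · intro h
    exact ⟨fun σ hσ => h σ (fun hi => hσ hi.1), fun σ hσ => h σ (fun hi => hσ hi.2)⟩

theorem suppSub_sup (S T : Set X.cell) (k : ℤ) :
    X.suppSub Ω S k ⊔ X.suppSub Ω T k = X.suppSub Ω (S ∪ T) k := by
  refine le_antisymm (sup_le (X.suppSub_mono Ω Set.subset_union_left k)
    (X.suppSub_mono Ω Set.subset_union_right k)) ?_
  intro f hf
  rw [Submodule.mem_sup]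
  refine ⟨fun σ => if σ.1 ∈ S then f σ else 0, fun σ hσ => by simp [hσ],
    fun σ => if σ.1 ∈ S then 0 else f σ, fun σ hσ => ?_, ?_⟩
  · by_cases hs : σ.1 ∈ S
    · simp [hs]
    · simp only [if_neg hs]
      exact hf σ (fun h => h.elim hs hσ)
  · funext σ
    by_cases hs : σ.1 ∈ S <;> simp [hs]

theorem D_mem_suppSub {S : Set X.cell}
    (hS : ∀ τ σ : X.cell, τ ∈ S → X.κ τ σ ≠ 0 → σ ∈ S)
    {a : ℤ} (b : ℤ) {f : X.Cz Ω a} (hf : f ∈ X.suppSub Ω S a) :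
    X.D Ω a b f ∈ X.suppSub Ω S b := by
  intro σ hσ
  rw [D_apply]
  refine Finset.sum_eq_zero fun τ _ => ?_
  rcases Classical.em (τ.1 ∈ S) with h | h
  · rcases eq_or_ne (X.κ τ.1 σ.1) 0 with hk | hk
    · rw [hk, zero_mul]
    · exact absurd (hS τ.1 σ.1 h hk) hσ
  · rw [hf τ h, mul_zero]

end CellComplex

namespace CellComplex

variable {F : Type} [Field F] (X : CellComplex F) (Ω : Set X.cell)

open Module

/-- Coordinate projection onto the cells lying in `S`. -/
noncomputable def projC (S : Set X.cell) (k : ℤ) : X.Cz Ω k →ₗ[F] X.Cz Ω k where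
  toFun f := fun σ => if σ.1 ∈ S then f σ else 0
  map_add' f g := by funext σ; by_cases h : σ.1 ∈ S <;> simp [h]
  map_smul' r f := by funext σ; by_cases h : σ.1 ∈ S <;> simp [h]

theorem projC_mem (S : Set X.cell) (k : ℤ) (f : X.Cz Ω k) :
    X.projC Ω S k f ∈ X.suppSub Ω S k := fun σ hσ => by simp [projC, hσ]

theorem projC_eq_self {S : Set X.cell} {k : ℤ} {f : X.Cz Ω k}
    (hf : f ∈ X.suppSub Ω S k) : X.projC Ω S k f = f := by
  funext σ
  by_cases h : σ.1 ∈ S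
  · simp [projC, h]
  · simp only [projC, LinearMap.coe_mk, AddHom.coe_mk, if_neg h]
    exact (hf σ h).symm

theorem sub_projC_mem {S T : Set X.cell} {k : ℤ} {f : X.Cz Ω k}
    (hf : f ∈ X.suppSub Ω (S ∪ T) k) :
    f - X.projC Ω S k f ∈ X.suppSub Ω T k := by
  intro σ hσ
  by_cases h : σ.1 ∈ S
  · simp [projC, h]
  · simp only [Pi.sub_apply, projC, LinearMap.coe_mk, AddHom.coe_mk, if_neg h]
    rw [hf σ (fun hc => hc.elim h hσ)]
    ring

theorem projC_mem_inter {T : Set X.cell} {k : ℤ} {f : X.Cz Ω k}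
    (hf : f ∈ X.suppSub Ω T k) (S' : Set X.cell) :
    X.projC Ω S' k f ∈ X.suppSub Ω (S' ∩ T) k := by
  intro σ hσ
  by_cases h : σ.1 ∈ S'
  · simp only [projC, LinearMap.coe_mk, AddHom.coe_mk, if_pos h]
    exact hf σ (fun ht => hσ ⟨h, ht⟩)
  · simp [projC, h]

/-- Transfer: image of the kernel of the boundary of `S` inside the ambient chains. -/
theorem map_inclC_ker (S : Set X.cell) (hSΩ : S ⊆ Ω)
    (hS : ∀ τ σ : X.cell, τ ∈ S → X.κ τ σ ≠ 0 → σ ∈ S) (a b : ℤ) :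
    Submodule.map (X.inclC S Ω hSΩ a) (LinearMap.ker (X.D S a b))
      = X.suppSub Ω S a ⊓ LinearMap.ker (X.D Ω a b) := by
  ext f
  constructor
  · rintro ⟨g, hg, rfl⟩
    refine ⟨(X.range_inclC Ω S hSΩ a) ▸ ⟨g, rfl⟩, ?_⟩
    simp only [SetLike.mem_coe, LinearMap.mem_ker] at hg ⊢
    funext σ
    rw [X.incl_comm_apply S Ω hSΩ hS a b g σ, hg]
    simp
    intro _
    rfl
  · rintro ⟨h1, h2⟩
    rw [← X.range_inclC Ω S hSΩ a] at h1
    obtain ⟨g, rfl⟩ := h1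
    refine ⟨g, ?_, rfl⟩
    simp only [SetLike.mem_coe, LinearMap.mem_ker] at h2 ⊢
    apply X.inclC_injective S Ω hSΩ b
    rw [map_zero]
    funext σ
    rw [← X.incl_comm_apply S Ω hSΩ hS a b g σ, h2]

theorem map_inclC_range (S : Set X.cell) (hSΩ : S ⊆ Ω)
    (hS : ∀ τ σ : X.cell, τ ∈ S → X.κ τ σ ≠ 0 → σ ∈ S) (a b : ℤ) :
    Submodule.map (X.inclC S Ω hSΩ b) (LinearMap.range (X.D S a b))
      = Submodule.map (X.D Ω a b) (X.suppSub Ω S a) := by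
  ext f
  constructor
  · rintro ⟨g, ⟨w, rfl⟩, rfl⟩
    refine ⟨X.inclC S Ω hSΩ a w, (X.range_inclC Ω S hSΩ a) ▸ ⟨w, rfl⟩, ?_⟩
    funext σ
    exact X.incl_comm_apply S Ω hSΩ hS a b w σ
  · rintro ⟨g, hg, rfl⟩
    rw [← X.range_inclC Ω S hSΩ a] at hg
    obtain ⟨w, rfl⟩ := hg
    refine ⟨X.D S a b w, ⟨w, rfl⟩, ?_⟩
    funext σ
    exact (X.incl_comm_apply S Ω hSΩ hS a b w σ).symm

/-- The dimension of the homology of `S` in terms of ambient subspaces. -/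
theorem Hd_eq (S : Set X.cell) (hSΩ : S ⊆ Ω)
    (hS : ∀ τ σ : X.cell, τ ∈ S → X.κ τ σ ≠ 0 → σ ∈ S) (q : ℤ) :
    X.Hd S q + finrank F ↥(Submodule.map (X.D Ω (q+1) q) (X.suppSub Ω S (q+1)))
      = finrank F ↥(X.suppSub Ω S q ⊓ LinearMap.ker (X.D Ω q (q-1))) := by
  have h0 := finrank_hquot (X.D S q (q-1)) (X.D S (q+1) q)
  have hle : LinearMap.range (X.D S (q+1) q) ≤ LinearMap.ker (X.D S q (q-1)) := by
    rintro f ⟨w, rfl⟩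
    exact X.DD S hS q (q-1) (q+1) (by ring) w
  rw [inf_eq_left.2 hle] at h0
  have h1 : finrank F ↥(LinearMap.range (X.D S (q+1) q))
      = finrank F ↥(Submodule.map (X.D Ω (q+1) q) (X.suppSub Ω S (q+1))) := by
    rw [← X.map_inclC_range Ω S hSΩ hS (q+1) q,
      finrank_map_of_injective _ (X.inclC_injective S Ω hSΩ q)]
  have h2 : finrank F ↥(LinearMap.ker (X.D S q (q-1)))
      = finrank F ↥(X.suppSub Ω S q ⊓ LinearMap.ker (X.D Ω q (q-1))) := by
    rw [← X.map_inclC_ker Ω S hSΩ hS q (q-1),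
      finrank_map_of_injective _ (X.inclC_injective S Ω hSΩ q)]
  rw [h1, h2] at h0
  exact h0

end CellComplex

namespace CellComplex

variable {F : Type} [Field F] (X : CellComplex F) (Ω : Set X.cell)

open Module Submodule LinearMap

set_option maxHeartbeats 1000000 in
/-- Mayer–Vietoris count for cycles. -/
theorem MV_Z (A B : Set X.cell) (q : ℤ) :
    finrank F ↥(X.suppSub Ω (A ∪ B) q ⊓ ker (X.D Ω q (q-1)))
      + finrank F ↥(Submodule.map (X.D Ω q (q-1)) (X.suppSub Ω (A ∩ B) q))
      + finrank F ↥(X.suppSub Ω (A ∩ B) q ⊓ ker (X.D Ω q (q-1)))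
    = finrank F ↥(X.suppSub Ω A q ⊓ ker (X.D Ω q (q-1)))
      + finrank F ↥(X.suppSub Ω B q ⊓ ker (X.D Ω q (q-1)))
      + finrank F ↥(Submodule.map (X.D Ω q (q-1)) (X.suppSub Ω A q)
          ⊓ Submodule.map (X.D Ω q (q-1)) (X.suppSub Ω B q)) := by
  classical
  set d := X.D Ω q (q-1) with hd
  set ZU := X.suppSub Ω (A ∪ B) q ⊓ ker d with hZU
  set ZA := X.suppSub Ω A q ⊓ ker d with hZA
  set ZB := X.suppSub Ω B q ⊓ ker d with hZB
  set ZD := X.suppSub Ω (A ∩ B) q ⊓ ker d with hZD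
  set N := Submodule.map d (X.suppSub Ω A q) ⊓ Submodule.map d (X.suppSub Ω B q) with hN
  set BD := Submodule.map d (X.suppSub Ω (A ∩ B) q) with hBD
  set P := Submodule.comap N.subtype BD with hP
  have hBDN : BD ≤ N := le_inf
    (Submodule.map_mono (X.suppSub_mono Ω Set.inter_subset_left q))
    (Submodule.map_mono (X.suppSub_mono Ω Set.inter_subset_right q))
  -- the connecting-style map
  have pf : ∀ z : ↥ZU, d (X.projC Ω A q z.1) ∈ N := by
    intro z
    constructor
    · exact ⟨X.projC Ω A q z.1, X.projC_mem Ω A q z.1, rfl⟩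
    · refine ⟨X.projC Ω A q z.1 - z.1, ?_, ?_⟩
      · have := X.sub_projC_mem Ω (S := A) (T := B) (f := z.1) z.2.1
        simpa using (X.suppSub Ω B q).neg_mem this
      · have hz : d z.1 = 0 := z.2.2
        rw [map_sub, hz, sub_zero]
  let L : ↥ZU →ₗ[F] ↥N := LinearMap.codRestrict N
    (d ∘ₗ (X.projC Ω A q) ∘ₗ ZU.subtype) pf
  let δ : ↥ZU →ₗ[F] (↥N ⧸ P) := P.mkQ.comp L
  have hLapp : ∀ z : ↥ZU, (L z : X.Cz Ω (q-1)) = d (X.projC Ω A q z.1) := fun z => rfl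
  -- surjectivity
  have hsurj : Function.Surjective δ := by
    intro y
    obtain ⟨n, rfl⟩ := Submodule.mkQ_surjective P y
    obtain ⟨a, ha, hDa⟩ := n.2.1
    obtain ⟨b, hb, hDb⟩ := n.2.2
    have hzmem : a - b ∈ ZU := by
      constructor
      · exact sub_mem (X.suppSub_mono Ω Set.subset_union_left q ha)
          (X.suppSub_mono Ω Set.subset_union_right q hb)
      · show d (a - b) = 0
        rw [map_sub, hDa, hDb, sub_self]
    refine ⟨⟨a - b, hzmem⟩, ?_⟩
    show P.mkQ (L ⟨a - b, hzmem⟩) = P.mkQ n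
    rw [Submodule.mkQ_apply, Submodule.mkQ_apply, Submodule.Quotient.eq]
    show (L ⟨a - b, hzmem⟩ : X.Cz Ω (q-1)) - n.1 ∈ BD
    rw [hLapp]
    have hproj : X.projC Ω A q (a - b) = a - X.projC Ω A q b := by
      rw [map_sub, X.projC_eq_self Ω ha]
    rw [hproj, map_sub, hDa]
    have : n.1 - d (X.projC Ω A q b) - n.1 = d (-(X.projC Ω A q b)) := by
      rw [map_neg]; abel
    rw [this]
    exact ⟨-(X.projC Ω A q b),
      (X.suppSub Ω (A ∩ B) q).neg_mem (X.projC_mem_inter Ω hb A), rfl⟩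
  -- kernel
  have hker : ker δ = Submodule.comap ZU.subtype (ZA ⊔ ZB) := by
    ext z
    simp only [LinearMap.mem_ker, Submodule.mem_comap, Submodule.coe_subtype]
    constructor
    · intro h
      have : (L z : X.Cz Ω (q-1)) ∈ BD := by
        have h' : L z ∈ P := by
          rwa [LinearMap.comp_apply, Submodule.mkQ_apply, Submodule.Quotient.mk_eq_zero] at h
        exact h'
      rw [hLapp] at this
      obtain ⟨e, he, hDe⟩ := this
      rw [Submodule.mem_sup]
      refine ⟨X.projC Ω A q z.1 - e, ⟨?_, ?_⟩, z.1 - X.projC Ω A q z.1 + e, ⟨?_, ?_⟩, by abel⟩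
      · exact sub_mem (X.projC_mem Ω A q z.1)
          (X.suppSub_mono Ω Set.inter_subset_left q he)
      · show d _ = 0
        rw [map_sub, hDe, sub_self]
      · exact add_mem (X.sub_projC_mem Ω z.2.1)
          (X.suppSub_mono Ω Set.inter_subset_right q he)
      · show d _ = 0
        have hz : d z.1 = 0 := z.2.2
        rw [map_add, map_sub, hz, hDe, zero_sub, neg_add_cancel]
    · intro h
      rw [Submodule.mem_sup] at h
      obtain ⟨za, hza, zb, hzb, hsum⟩ := h
      rw [LinearMap.comp_apply, Submodule.mkQ_apply, Submodule.Quotient.mk_eq_zero]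
      show (L z : X.Cz Ω (q-1)) ∈ BD
      rw [hLapp]
      have hproj : X.projC Ω A q z.1 = za + X.projC Ω A q zb := by
        rw [← hsum, map_add, X.projC_eq_self Ω hza.1]
      have hza' : d za = 0 := hza.2
      rw [hproj, map_add, hza', zero_add]
      exact ⟨X.projC Ω A q zb, X.projC_mem_inter Ω hzb.1 A, rfl⟩
  -- dimension count
  have h1 := LinearMap.finrank_range_add_finrank_ker δ
  have h2 : finrank F ↥(range δ) = finrank F (↥N ⧸ P) := by
    rw [LinearMap.range_eq_top.2 hsurj]
    exact finrank_top F _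
  have h3 : finrank F (↥N ⧸ P) + finrank F ↥BD = finrank F ↥N := by
    have := Submodule.finrank_quotient_add_finrank P
    rwa [hP, finrank_comap_subtype, inf_eq_left.2 hBDN] at this
  have h4 : finrank F ↥(ker δ) = finrank F ↥(ZA ⊔ ZB) := by
    rw [hker, finrank_comap_subtype, inf_eq_left.2 ?_]
    exact sup_le (inf_le_inf_right _ (X.suppSub_mono Ω Set.subset_union_left q))
      (inf_le_inf_right _ (X.suppSub_mono Ω Set.subset_union_right q))
  have h5 := Submodule.finrank_sup_add_finrank_inf_eq ZA ZB
  have h6 : ZA ⊓ ZB = ZD := by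
    rw [hZA, hZB, hZD, ← X.suppSub_inf Ω A B q]
    ext f
    simp only [Submodule.mem_inf]
    tauto
  rw [h6] at h5
  omega

theorem MV_B (A B : Set X.cell) (a b : ℤ) :
    finrank F ↥(Submodule.map (X.D Ω a b) (X.suppSub Ω (A ∪ B) a))
      + finrank F ↥(Submodule.map (X.D Ω a b) (X.suppSub Ω A a)
          ⊓ Submodule.map (X.D Ω a b) (X.suppSub Ω B a))
    = finrank F ↥(Submodule.map (X.D Ω a b) (X.suppSub Ω A a))
      + finrank F ↥(Submodule.map (X.D Ω a b) (X.suppSub Ω B a)) := by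
  rw [← X.suppSub_sup Ω A B a, Submodule.map_sup]
  exact Submodule.finrank_sup_add_finrank_inf_eq _ _

end CellComplex

namespace CellComplex

variable {F : Type} [Field F] (X : CellComplex F)

open Module Submodule LinearMap

theorem inclC_ker_mem {S T : Set X.cell} (hST : S ⊆ T)
    (hS : ∀ τ σ : X.cell, τ ∈ S → X.κ τ σ ≠ 0 → σ ∈ S) {a b : ℤ} {z : X.Cz S a}
    (hz : z ∈ ker (X.D S a b)) : X.inclC S T hST a z ∈ ker (X.D T a b) := by
  rw [LinearMap.mem_ker] at hz ⊢
  funext σ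
  rw [X.incl_comm_apply S T hST hS a b z σ, hz]
  simp
  intro _
  rfl

theorem Hmap_mk (S T : Set X.cell) (hST : S ⊆ T)
    (hS : ∀ τ σ : X.cell, τ ∈ S → X.κ τ σ ≠ 0 → σ ∈ S) (q : ℤ)
    (z : X.Cz S q) (hz : z ∈ ker (X.D S q (q-1)))
    (hz' : X.inclC S T hST q z ∈ ker (X.D T q (q-1))) :
    X.Hmap S T hST hS q (Submodule.Quotient.mk ⟨z, hz⟩)
      = Submodule.Quotient.mk ⟨X.inclC S T hST q z, hz'⟩ := rfl

theorem Hmap_id (S : Set X.cell) (hss : S ⊆ S)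
    (hS : ∀ τ σ : X.cell, τ ∈ S → X.κ τ σ ≠ 0 → σ ∈ S) (q : ℤ) :
    X.Hmap S S hss hS q = LinearMap.id := by
  apply Submodule.linearMap_qext
  apply LinearMap.ext
  intro z
  simp only [LinearMap.comp_apply, Submodule.mkQ_apply, LinearMap.id_apply]
  obtain ⟨z, hz⟩ := z
  rw [X.Hmap_mk S S hss hS q z hz (by rwa [X.inclC_self S hss q z])]
  exact congrArg _ (Subtype.ext (X.inclC_self S hss q z))

theorem Hmap_Hmap (R S T : Set X.cell) (hRS : R ⊆ S) (hST : S ⊆ T)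
    (hR : ∀ τ σ : X.cell, τ ∈ R → X.κ τ σ ≠ 0 → σ ∈ R)
    (hS : ∀ τ σ : X.cell, τ ∈ S → X.κ τ σ ≠ 0 → σ ∈ S)
    (q : ℤ) (x : X.Hsp R q) :
    X.Hmap S T hST hS q (X.Hmap R S hRS hR q x)
      = X.Hmap R T (hRS.trans hST) hR q x := by
  obtain ⟨⟨z, hz⟩, rfl⟩ := Submodule.mkQ_surjective _ x
  rw [Submodule.mkQ_apply,
    X.Hmap_mk R S hRS hR q z hz (X.inclC_ker_mem hRS hR hz),
    X.Hmap_mk S T hST hS q _ _ (X.inclC_ker_mem hST hS (X.inclC_ker_mem hRS hR hz)),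
    X.Hmap_mk R T (hRS.trans hST) hR q z hz (X.inclC_ker_mem (hRS.trans hST) hR hz)]
  exact congrArg _ (Subtype.ext (X.inclC_comp_apply R S T hRS hST q z))

instance (S : Set X.cell) (q : ℤ) : FiniteDimensional F (X.Hsp S q) := by
  unfold Hsp Hquot
  infer_instance

set_option maxHeartbeats 1000000 in
/-- The crux: dimension of the intersection of the kernels of the two induced maps
on homology, in terms of boundary subspaces of the ambient complex. -/
theorem ker_Hmap_inter (Ω SD SA SB : Set X.cell)
    (hfcΩ : ∀ τ σ : X.cell, τ ∈ Ω → X.κ τ σ ≠ 0 → σ ∈ Ω)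
    (hfcD : ∀ τ σ : X.cell, τ ∈ SD → X.κ τ σ ≠ 0 → σ ∈ SD)
    (hfcA : ∀ τ σ : X.cell, τ ∈ SA → X.κ τ σ ≠ 0 → σ ∈ SA)
    (hfcB : ∀ τ σ : X.cell, τ ∈ SB → X.κ τ σ ≠ 0 → σ ∈ SB)
    (hDA : SD ⊆ SA) (hDB : SD ⊆ SB) (hAΩ : SA ⊆ Ω) (hBΩ : SB ⊆ Ω)
    (hD : SD = SA ∩ SB) (q q' : ℤ) (hq' : q' = q + 1) :
    finrank F ↥(ker (X.Hmap SD SA hDA hfcD q) ⊓ ker (X.Hmap SD SB hDB hfcD q))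
      + finrank F ↥(Submodule.map (X.D Ω q' q) (X.suppSub Ω SD q'))
    = finrank F ↥(Submodule.map (X.D Ω q' q) (X.suppSub Ω SA q')
        ⊓ Submodule.map (X.D Ω q' q) (X.suppSub Ω SB q')) := by
  classical
  subst hq'
  have hDΩ : SD ⊆ Ω := hDA.trans hAΩ
  set dout := X.D SD q (q-1) with hdout
  set din := X.D SD (q+1) q with hdin
  set pD : Submodule F ↥(ker dout) := comap (ker dout).subtype (range din) with hpD
  set BA := Submodule.map (X.D Ω (q+1) q) (X.suppSub Ω SA (q+1)) with hBA
  set BB := Submodule.map (X.D Ω (q+1) q) (X.suppSub Ω SB (q+1)) with hBB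
  set BDm := Submodule.map (X.D Ω (q+1) q) (X.suppSub Ω SD (q+1)) with hBDm
  set φ : ↥(ker dout) →ₗ[F] X.Cz Ω q := (X.inclC SD Ω hDΩ q) ∘ₗ (ker dout).subtype
    with hφ
  have hφinj : Function.Injective φ :=
    (X.inclC_injective SD Ω hDΩ q).comp (Submodule.injective_subtype _)
  set M : Submodule F ↥(ker dout) := comap φ (BA ⊓ BB) with hM
  -- Step 1 : the kernel intersection is the image of M
  have hK : ker (X.Hmap SD SA hDA hfcD q) ⊓ ker (X.Hmap SD SB hDB hfcD q)
      = Submodule.map pD.mkQ M := by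
    ext x
    constructor
    · rintro ⟨h1, h2⟩
      obtain ⟨⟨z, hz⟩, rfl⟩ := Submodule.mkQ_surjective _ x
      rw [SetLike.mem_coe, LinearMap.mem_ker, Submodule.mkQ_apply,
        X.Hmap_mk SD SA hDA hfcD q z hz (X.inclC_ker_mem hDA hfcD hz),
        Submodule.Quotient.mk_eq_zero, Submodule.mem_comap] at h1
      rw [SetLike.mem_coe, LinearMap.mem_ker, Submodule.mkQ_apply,
        X.Hmap_mk SD SB hDB hfcD q z hz (X.inclC_ker_mem hDB hfcD hz),
        Submodule.Quotient.mk_eq_zero, Submodule.mem_comap] at h2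
      refine ⟨⟨z, hz⟩, ⟨?_, ?_⟩, rfl⟩
      · have : φ ⟨z, hz⟩ = X.inclC SA Ω hAΩ q (X.inclC SD SA hDA q z) := by
          rw [hφ]
          exact (X.inclC_comp_apply SD SA Ω hDA hAΩ q z).symm
        rw [hBA, ← X.map_inclC_range Ω SA hAΩ hfcA (q+1) q]
        exact this ▸ Submodule.mem_map_of_mem h1
      · have : φ ⟨z, hz⟩ = X.inclC SB Ω hBΩ q (X.inclC SD SB hDB q z) := by
          rw [hφ]
          exact (X.inclC_comp_apply SD SB Ω hDB hBΩ q z).symm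
        rw [hBB, ← X.map_inclC_range Ω SB hBΩ hfcB (q+1) q]
        exact this ▸ Submodule.mem_map_of_mem h2
    · rintro ⟨⟨z, hz⟩, ⟨h1, h2⟩, rfl⟩
      constructor
      · rw [SetLike.mem_coe, LinearMap.mem_ker, Submodule.mkQ_apply,
          X.Hmap_mk SD SA hDA hfcD q z hz (X.inclC_ker_mem hDA hfcD hz),
          Submodule.Quotient.mk_eq_zero, Submodule.mem_comap]
        rw [hBA, ← X.map_inclC_range Ω SA hAΩ hfcA (q+1) q] at h1
        obtain ⟨w, hw, heq⟩ := h1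
        have : w = X.inclC SD SA hDA q z := by
          apply X.inclC_injective SA Ω hAΩ q
          rw [heq, hφ]
          exact (X.inclC_comp_apply SD SA Ω hDA hAΩ q z).symm
        exact this ▸ hw
      · rw [SetLike.mem_coe, LinearMap.mem_ker, Submodule.mkQ_apply,
          X.Hmap_mk SD SB hDB hfcD q z hz (X.inclC_ker_mem hDB hfcD hz),
          Submodule.Quotient.mk_eq_zero, Submodule.mem_comap]
        rw [hBB, ← X.map_inclC_range Ω SB hBΩ hfcB (q+1) q] at h2
        obtain ⟨w, hw, heq⟩ := h2
        have : w = X.inclC SD SB hDB q z := by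
          apply X.inclC_injective SB Ω hBΩ q
          rw [heq, hφ]
          exact (X.inclC_comp_apply SD SB Ω hDB hBΩ q z).symm
        exact this ▸ hw
  -- pD ≤ M
  have hBDle : BDm ≤ BA ⊓ BB :=
    le_inf (Submodule.map_mono (X.suppSub_mono Ω hDA (q+1)))
      (Submodule.map_mono (X.suppSub_mono Ω hDB (q+1)))
  have hpDM : pD ≤ M := by
    rintro ⟨z, hz⟩ hmem
    rw [hpD, Submodule.mem_comap] at hmem
    have : φ ⟨z, hz⟩ ∈ BDm := by
      rw [hBDm, ← X.map_inclC_range Ω SD hDΩ hfcD (q+1) q]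
      exact Submodule.mem_map_of_mem hmem
    exact hBDle this
  -- Step 2 : dimension of the image of M
  have h2 : finrank F ↥(Submodule.map pD.mkQ M) + finrank F ↥pD = finrank F ↥M := by
    have := finrank_map_add_finrank_inf_ker pD.mkQ M
    rwa [Submodule.ker_mkQ, inf_eq_right.2 hpDM] at this
  -- Step 3 : finrank M = finrank (BA ⊓ BB)
  have h3 : finrank F ↥M = finrank F ↥(BA ⊓ BB) := by
    have hmapM : Submodule.map φ M = BA ⊓ BB := by
      rw [hM, Submodule.map_comap_eq]
      refine inf_eq_right.2 ?_
      have hrange : range φ = X.suppSub Ω SD q ⊓ ker (X.D Ω q (q-1)) := by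
        rw [hφ, LinearMap.range_comp, Submodule.range_subtype]
        exact X.map_inclC_ker Ω SD hDΩ hfcD q (q-1)
      rw [hrange]
      refine le_inf ?_ ?_
      · have hA' : BA ≤ X.suppSub Ω SA q := by
          rintro f ⟨w, hw, rfl⟩
          exact X.D_mem_suppSub Ω hfcA q hw
        have hB' : BB ≤ X.suppSub Ω SB q := by
          rintro f ⟨w, hw, rfl⟩
          exact X.D_mem_suppSub Ω hfcB q hw
        refine le_trans (inf_le_inf hA' hB') ?_
        rw [X.suppSub_inf, ← hD]
      · refine le_trans inf_le_left ?_
        rintro f ⟨w, _, rfl⟩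
        exact X.DD Ω hfcΩ q (q-1) (q+1) (by ring) w
    rw [← hmapM, finrank_map_of_injective φ hφinj]
  -- Step 4 : finrank pD = finrank BDm
  have h4 : finrank F ↥pD = finrank F ↥BDm := by
    have hle : range din ≤ ker dout := by
      rintro f ⟨w, rfl⟩
      exact X.DD SD hfcD q (q-1) (q+1) (by ring) w
    rw [hpD, finrank_comap_subtype, inf_eq_left.2 hle]
    rw [hBDm, ← X.map_inclC_range Ω SD hDΩ hfcD (q+1) q,
      finrank_map_of_injective _ (X.inclC_injective SD Ω hDΩ q)]
  rw [hK, ← h4, ← h3]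
  exact h2

end CellComplex

namespace CellComplex

variable {F : Type} [Field F] (X : CellComplex F)
  (g : X.cell → Fin 2 → ℤ) (hg : ∀ τ σ : X.cell, X.κ τ σ ≠ 0 → g σ ≤ g τ)
  (u : Fin 2 → ℤ)

open Module Submodule LinearMap

include hg

theorem KD_apply' (q a b : ℤ) (f : X.Ksp g q u a)
    (t : {s : Finset (Fin 2) // (s.card : ℤ) = b}) :
    X.KD g hg q u a b f t = ∑ j ∈ t.1ᶜ,
      ((-1 : F) ^ (t.1.filter (fun k => j < k)).card) •
        (if h : ((insert j t.1).card : ℤ) = a then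
          X.Hmap (X.Xset g (u - eS (insert j t.1))) (X.Xset g (u - eS t.1))
            (X.Xset_mono g (sub_le_sub_left (eS_le_insert j t.1) u))
            (X.Xset_faceClosed g hg _) q (f ⟨insert j t.1, h⟩)
        else 0) := rfl

theorem Ksp_eq (q i : ℤ) (f : X.Ksp g q u i)
    (s t : {s : Finset (Fin 2) // (s.card : ℤ) = i})
    (h : s.1 = t.1)
    (hsub : X.Xset g (u - eS s.1) ⊆ X.Xset g (u - eS t.1)) :
    f t = X.Hmap (X.Xset g (u - eS s.1)) (X.Xset g (u - eS t.1)) hsub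
      (X.Xset_faceClosed g hg _) q (f s) := by
  obtain ⟨s, hs⟩ := s
  obtain ⟨t, ht⟩ := t
  dsimp only at h
  subst h
  rw [X.Hmap_id]
  rfl

theorem finrank_Ksp_proj (q i : ℤ) (t₀ : {s : Finset (Fin 2) // (s.card : ℤ) = i})
    (huniq : ∀ s : {s : Finset (Fin 2) // (s.card : ℤ) = i}, s.1 = t₀.1) :
    finrank F (X.Ksp g q u i)
      = finrank F (X.Hsp (X.Xset g (u - eS t₀.1)) q) := by
  have hbij : Function.Bijective
      (LinearMap.proj (R := F) (φ := fun s : {s : Finset (Fin 2) // (s.card : ℤ) = i} =>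
        X.Hsp (X.Xset g (u - eS s.1)) q) t₀) := by
    constructor
    · intro f f' h
      funext t
      rw [X.Ksp_eq g hg u q i f t₀ t (huniq t).symm (by rw [huniq t]),
        X.Ksp_eq g hg u q i f' t₀ t (huniq t).symm (by rw [huniq t])]
      exact congrArg _ h
    · intro x
      exact ⟨Pi.single t₀ x, by rw [LinearMap.proj_apply, Pi.single_eq_same]⟩
  exact (LinearEquiv.ofBijective _ hbij).finrank_eq

theorem finrank_Ksp_zero (q i : ℤ) (hi : i = 0) :
    finrank F (X.Ksp g q u i) = X.Hd (X.Xset g u) q := by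
  subst hi
  rw [X.finrank_Ksp_proj g hg u q 0 ⟨∅, by decide⟩
    (fun s => Finset.card_eq_zero.1 (by exact_mod_cast s.2))]
  rw [show u - eS (∅ : Finset (Fin 2)) = u from by funext i; simp [eS]]
  rfl

theorem finrank_Ksp_two (q i : ℤ) (hi : i = 2) :
    finrank F (X.Ksp g q u i)
      = X.Hd (X.Xset g (u - eS ({0,1} : Finset (Fin 2)))) q := by
  subst hi
  rw [X.finrank_Ksp_proj g hg u q 2 ⟨{0,1}, by decide⟩
    (fun s => (by decide : ∀ s : Finset (Fin 2), s.card = 2 → s = {0,1}) s.1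
      (by exact_mod_cast s.2))]
  rfl

set_option synthInstance.maxHeartbeats 1000000 in
set_option maxHeartbeats 1000000 in
theorem finrank_Ksp_one (q i : ℤ) (hi : i = 1) :
    finrank F (X.Ksp g q u i)
      = X.Hd (X.Xset g (u - eS ({0} : Finset (Fin 2)))) q
        + X.Hd (X.Xset g (u - eS ({1} : Finset (Fin 2)))) q := by
  subst hi
  set i0 : {s : Finset (Fin 2) // (s.card : ℤ) = 1} := ⟨{0}, by decide⟩ with hi0
  set i1 : {s : Finset (Fin 2) // (s.card : ℤ) = 1} := ⟨{1}, by decide⟩ with hi1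
  set Φ := (LinearMap.proj (R := F) (φ := fun s : {s : Finset (Fin 2) // (s.card : ℤ) = 1} =>
        X.Hsp (X.Xset g (u - eS s.1)) q) i0).prod (LinearMap.proj i1) with hΦ
  have hbij : Function.Bijective Φ := by
    constructor
    · intro f f' h
      simp only [hΦ, LinearMap.prod_apply, Pi.prod, Function.prod_apply, Prod.mk.injEq, LinearMap.proj_apply] at h
      funext t
      obtain ⟨s, hs⟩ := t
      have hs' : s.card = 1 := by exact_mod_cast hs
      rcases (by decide : ∀ s : Finset (Fin 2), s.card = 1 → s = {0} ∨ s = {1}) s hs'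
        with rfl | rfl
      · rw [X.Ksp_eq g hg u q 1 f i0 ⟨{0}, hs⟩ rfl subset_rfl,
          X.Ksp_eq g hg u q 1 f' i0 ⟨{0}, hs⟩ rfl subset_rfl]
        exact congrArg _ h.1
      · rw [X.Ksp_eq g hg u q 1 f i1 ⟨{1}, hs⟩ rfl subset_rfl,
          X.Ksp_eq g hg u q 1 f' i1 ⟨{1}, hs⟩ rfl subset_rfl]
        exact congrArg _ h.2
    · rintro ⟨x, y⟩
      have hne0 : i1 ≠ i0 := fun h => absurd (congrArg Subtype.val h) (by decide)
      have hne1 : i0 ≠ i1 := fun h => absurd (congrArg Subtype.val h) (by decide)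
      refine ⟨Pi.single i0 x + Pi.single i1 y, ?_⟩
      simp only [hΦ, LinearMap.prod_apply, Pi.prod, Function.prod_apply, LinearMap.proj_apply, Pi.add_apply,
        Pi.single_eq_same, Pi.single_eq_of_ne hne0, Pi.single_eq_of_ne hne1,
        add_zero, zero_add]
  rw [(LinearEquiv.ofBijective _ hbij).finrank_eq, Module.finrank_prod]
  rfl

end CellComplex

theorem eS_nonneg {n : ℕ} (s : Finset (Fin n)) (i : Fin n) : 0 ≤ eS s i := by
  simp only [eS, Finset.sum_apply]
  exact Finset.sum_nonneg fun j _ => eb_nonneg j i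

theorem eS_mono {n : ℕ} {s t : Finset (Fin n)} (h : s ⊆ t) : eS s ≤ eS t := by
  intro i
  simp only [eS, Finset.sum_apply]
  exact Finset.sum_le_sum_of_subset_of_nonneg h fun j _ _ => eb_nonneg j i

namespace CellComplex

variable {F : Type} [Field F] (X : CellComplex F)
  (g : X.cell → Fin 2 → ℤ) (hg : ∀ τ σ : X.cell, X.κ τ σ ≠ 0 → g σ ≤ g τ)
  (u : Fin 2 → ℤ)

open Module Submodule LinearMap

include hg

set_option maxHeartbeats 1000000 in
theorem d2_apply_zero (q : ℤ) (f : X.Ksp g q u 2)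
    (pf1 : (({0} : Finset (Fin 2)).card : ℤ) = 1)
    (hsub : X.Xset g (u - eS ({0,1} : Finset (Fin 2)))
      ⊆ X.Xset g (u - eS ({0} : Finset (Fin 2))))
    (pf2 : ((({0,1} : Finset (Fin 2))).card : ℤ) = 2) :
    X.KD g hg q u 2 1 f ⟨{0}, pf1⟩
      = X.Hmap _ _ hsub (X.Xset_faceClosed g hg _) q (f ⟨{0,1}, pf2⟩) := by
  have hins : ((insert (1:Fin 2) ({0}:Finset (Fin 2))).card : ℤ) = 2 := by decide
  have hset : ({0,1} : Finset (Fin 2)) = insert (1:Fin 2) {0} := by decide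
  have hsubm : X.Xset g (u - eS ({0,1} : Finset (Fin 2)))
      ⊆ X.Xset g (u - eS (insert (1:Fin 2) ({0} : Finset (Fin 2)))) := by rw [← hset]
  rw [X.KD_apply' g hg u q 2 1 f ⟨{0}, pf1⟩]
  dsimp only
  rw [show (({0} : Finset (Fin 2)))ᶜ = {1} from by decide, Finset.sum_singleton,
    dif_pos hins,
    show (({0}:Finset (Fin 2)).filter (fun k => (1:Fin 2) < k)).card = 0 from by decide,
    pow_zero, one_smul,
    X.Ksp_eq g hg u q 2 f ⟨{0,1}, pf2⟩ ⟨insert 1 {0}, hins⟩ hset hsubm,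
    X.Hmap_Hmap]

set_option maxHeartbeats 1000000 in
theorem d2_apply_one (q : ℤ) (f : X.Ksp g q u 2)
    (pf1 : (({1} : Finset (Fin 2)).card : ℤ) = 1)
    (hsub : X.Xset g (u - eS ({0,1} : Finset (Fin 2)))
      ⊆ X.Xset g (u - eS ({1} : Finset (Fin 2))))
    (pf2 : ((({0,1} : Finset (Fin 2))).card : ℤ) = 2) :
    X.KD g hg q u 2 1 f ⟨{1}, pf1⟩
      = -(X.Hmap _ _ hsub (X.Xset_faceClosed g hg _) q (f ⟨{0,1}, pf2⟩)) := by
  have hins : ((insert (0:Fin 2) ({1}:Finset (Fin 2))).card : ℤ) = 2 := by decide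
  have hset : ({0,1} : Finset (Fin 2)) = insert (0:Fin 2) {1} := rfl
  have hsubm : X.Xset g (u - eS ({0,1} : Finset (Fin 2)))
      ⊆ X.Xset g (u - eS (insert (0:Fin 2) ({1} : Finset (Fin 2)))) := by rw [← hset]
  rw [X.KD_apply' g hg u q 2 1 f ⟨{1}, pf1⟩]
  dsimp only
  rw [show (({1} : Finset (Fin 2)))ᶜ = {0} from by decide, Finset.sum_singleton,
    dif_pos hins,
    show (({1}:Finset (Fin 2)).filter (fun k => (0:Fin 2) < k)).card = 1 from by decide,
    pow_one,
    X.Ksp_eq g hg u q 2 f ⟨{0,1}, pf2⟩ ⟨insert 0 {1}, hins⟩ hset hsubm,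
    X.Hmap_Hmap, neg_one_smul]

set_option maxHeartbeats 1000000 in
theorem finrank_ker_d2 (q a b : ℤ) (ha : a = 2) (hb : b = 1)
    (hDA : X.Xset g (u - eS ({0,1} : Finset (Fin 2)))
      ⊆ X.Xset g (u - eS ({0} : Finset (Fin 2))))
    (hDB : X.Xset g (u - eS ({0,1} : Finset (Fin 2)))
      ⊆ X.Xset g (u - eS ({1} : Finset (Fin 2)))) :
    finrank F ↥(ker (X.KD g hg q u a b))
      = finrank F ↥(ker (X.Hmap _ _ hDA (X.Xset_faceClosed g hg _) q)
          ⊓ ker (X.Hmap _ _ hDB (X.Xset_faceClosed g hg _) q)) := by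
  subst ha hb
  have pf2 : ((({0,1} : Finset (Fin 2))).card : ℤ) = 2 := by decide
  have hproj_inj : Function.Injective (LinearMap.proj (R := F)
      (φ := fun s : {s : Finset (Fin 2) // (s.card : ℤ) = 2} =>
        X.Hsp (X.Xset g (u - eS s.1)) q) ⟨{0,1}, pf2⟩) := by
    intro f f' h
    funext t
    have ht : (⟨{0,1}, pf2⟩ : {s : Finset (Fin 2) // (s.card : ℤ) = 2}).1 = t.1 :=
      ((by decide : ∀ s : Finset (Fin 2), s.card = 2 → s = {0,1}) t.1
        (by exact_mod_cast t.2)).symm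
    rw [X.Ksp_eq g hg u q 2 f ⟨{0,1}, pf2⟩ t ht (by rw [ht]),
        X.Ksp_eq g hg u q 2 f' ⟨{0,1}, pf2⟩ t ht (by rw [ht])]
    exact congrArg _ h
  have hmap : Submodule.map
        (LinearMap.proj (R := F)
          (φ := fun s : {s : Finset (Fin 2) // (s.card : ℤ) = 2} =>
            X.Hsp (X.Xset g (u - eS s.1)) q) ⟨{0,1}, pf2⟩)
        (ker (X.KD g hg q u 2 1))
      = (ker (X.Hmap _ _ hDA (X.Xset_faceClosed g hg _) q)
          ⊓ ker (X.Hmap _ _ hDB (X.Xset_faceClosed g hg _) q)) := by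
    ext x
    constructor
    · rintro ⟨f, hf, rfl⟩
      have hf' : X.KD g hg q u 2 1 f = 0 := hf
      constructor
      · have pfs0 : (({0} : Finset (Fin 2)).card : ℤ) = 1 := by decide
        have h0 := congrFun hf' ⟨{0}, pfs0⟩
        rw [X.d2_apply_zero g hg u q f pfs0 hDA pf2] at h0
        exact h0
      · have pfs1 : (({1} : Finset (Fin 2)).card : ℤ) = 1 := by decide
        have h1 := congrFun hf' ⟨{1}, pfs1⟩
        rw [X.d2_apply_one g hg u q f pfs1 hDB pf2] at h1
        exact neg_eq_zero.1 h1
    · intro hx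
      refine ⟨Pi.single ⟨{0,1}, pf2⟩ x, ?_,
        by rw [LinearMap.proj_apply, Pi.single_eq_same]⟩
      show X.KD g hg q u 2 1 (Pi.single ⟨{0,1}, pf2⟩ x) = 0
      funext t
      obtain ⟨s, hs⟩ := t
      rcases (by decide : ∀ s : Finset (Fin 2), s.card = 1 → s = {0} ∨ s = {1}) s
        (by exact_mod_cast hs) with rfl | rfl
      · rw [X.d2_apply_zero g hg u q _ hs hDA pf2, Pi.single_eq_same]
        exact hx.1
      · rw [X.d2_apply_one g hg u q _ hs hDB pf2, Pi.single_eq_same]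
        have hz : X.Hmap _ _ hDB (X.Xset_faceClosed g hg _) q x = 0 := hx.2
        rw [hz, neg_zero]
        rfl
  rw [← hmap, finrank_map_of_injective _ hproj_inj]

set_option maxHeartbeats 1000000 in
theorem d1_d2_zero (q a b c : ℤ) (ha : a = 2) (hb : b = 1) (hc : c = 0)
    (f : X.Ksp g q u a) :
    X.KD g hg q u b c (X.KD g hg q u a b f) = 0 := by
  subst ha hb hc
  have pf2 : ((({0,1} : Finset (Fin 2))).card : ℤ) = 2 := by decide
  have pfs0 : (({0} : Finset (Fin 2)).card : ℤ) = 1 := by decide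
  have pfs1 : (({1} : Finset (Fin 2)).card : ℤ) = 1 := by decide
  have hDA : X.Xset g (u - eS ({0,1} : Finset (Fin 2)))
      ⊆ X.Xset g (u - eS ({0} : Finset (Fin 2))) :=
    X.Xset_mono g (sub_le_sub_left (eS_mono (by decide)) u)
  have hDB : X.Xset g (u - eS ({0,1} : Finset (Fin 2)))
      ⊆ X.Xset g (u - eS ({1} : Finset (Fin 2))) :=
    X.Xset_mono g (sub_le_sub_left (eS_mono (by decide)) u)
  funext t₀
  obtain ⟨s, hs⟩ := t₀
  have hs' : s = ∅ := Finset.card_eq_zero.1 (by exact_mod_cast hs)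
  subst hs'
  have h0 : ((insert (0:Fin 2) (∅:Finset (Fin 2))).card : ℤ) = 1 := by decide
  have h1 : ((insert (1:Fin 2) (∅:Finset (Fin 2))).card : ℤ) = 1 := by decide
  have he0 : ({0} : Finset (Fin 2)) = insert (0:Fin 2) (∅:Finset (Fin 2)) := by decide
  have he1 : ({1} : Finset (Fin 2)) = insert (1:Fin 2) (∅:Finset (Fin 2)) := by decide
  have hsub0 : X.Xset g (u - eS ({0} : Finset (Fin 2)))
      ⊆ X.Xset g (u - eS (insert (0:Fin 2) (∅:Finset (Fin 2)))) := by rw [← he0]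
  have hsub1 : X.Xset g (u - eS ({1} : Finset (Fin 2)))
      ⊆ X.Xset g (u - eS (insert (1:Fin 2) (∅:Finset (Fin 2)))) := by rw [← he1]
  rw [X.KD_apply' g hg u q 1 0 _ ⟨∅, hs⟩]
  dsimp only
  rw [show ((∅ : Finset (Fin 2)))ᶜ = {0,1} from by decide,
    Finset.sum_insert (by decide : (0:Fin 2) ∉ ({1} : Finset (Fin 2))),
    Finset.sum_singleton, dif_pos h0, dif_pos h1]
  simp only [Finset.filter_empty, Finset.card_empty, pow_zero, one_smul]
  rw [X.Ksp_eq g hg u q 1 (X.KD g hg q u 2 1 f) ⟨{0}, pfs0⟩ ⟨insert 0 ∅, h0⟩ he0 hsub0,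
    X.Ksp_eq g hg u q 1 (X.KD g hg q u 2 1 f) ⟨{1}, pfs1⟩ ⟨insert 1 ∅, h1⟩ he1 hsub1,
    X.d2_apply_zero g hg u q f pfs0 hDA pf2,
    X.d2_apply_one g hg u q f pfs1 hDB pf2]
  rw [map_neg, map_neg, X.Hmap_Hmap, X.Hmap_Hmap, X.Hmap_Hmap, X.Hmap_Hmap]
  exact add_neg_cancel _

omit hg in
theorem Ksp_subsingleton (q i : ℤ) (hi : i < 0 ∨ 2 < i) :
    Subsingleton (X.Ksp g q u i) := by
  have he : IsEmpty {s : Finset (Fin 2) // (s.card : ℤ) = i} := by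
    refine ⟨fun s => ?_⟩
    have h := s.2
    have h2 := (by decide : ∀ s : Finset (Fin 2), s.card ≤ 2) s.1
    rcases hi with hi | hi <;> omega
  exact ⟨fun f g => funext fun s => he.elim s⟩

theorem KD_congr (q a a' b b' : ℤ) (ha : a = a') (hb : b = b') :
    Module.finrank F ↥(ker (X.KD g hg q u a b))
      = Module.finrank F ↥(ker (X.KD g hg q u a' b')) := by
  subst ha
  subst hb
  rfl

end CellComplex

set_option maxHeartbeats 4000000 in
set_option synthInstance.maxHeartbeats 1000000 in
/-- **Two-parameter equality for the homology of the union** (`n = 2`):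
`dim H_q(X^{u-e_1} ∪ X^{u-e_2}) = dim H_q(X^u) - ξ_0^q(u) + ξ_1^q(u) + ξ_2^{q-1}(u)`. -/
theorem two_parameter_union_homology {F : Type} [Field F] (X : CellComplex F)
    (g : X.cell → Fin 2 → ℤ)
    (hbdd : ∀ c : X.cell, 0 ≤ g c)
    (hg : ∀ τ σ : X.cell, X.κ τ σ ≠ 0 → g σ ≤ g τ)
    (u : Fin 2 → ℤ) (q : ℕ) :
    (X.Hd (X.Uset g u) (q : ℤ) : ℤ)
      = (X.Hd (X.Xset g u) (q : ℤ) : ℤ) - (X.xi g hg 0 (q : ℤ) u : ℤ)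
        + (X.xi g hg 1 (q : ℤ) u : ℤ) + (X.xi g hg 2 ((q : ℤ) - 1) u : ℤ) := by
  classical
  have hfcΩ := X.Xset_faceClosed g hg u
  have hfcA := X.Xset_faceClosed g hg (u - eS ({0} : Finset (Fin 2)))
  have hfcB := X.Xset_faceClosed g hg (u - eS ({1} : Finset (Fin 2)))
  have hfcD := X.Xset_faceClosed g hg (u - eS ({0,1} : Finset (Fin 2)))
  have hAΩ : X.Xset g (u - eS ({0} : Finset (Fin 2))) ⊆ X.Xset g u :=
    X.Xset_mono g (sub_le_self u (fun i => eS_nonneg _ i))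
  have hBΩ : X.Xset g (u - eS ({1} : Finset (Fin 2))) ⊆ X.Xset g u :=
    X.Xset_mono g (sub_le_self u (fun i => eS_nonneg _ i))
  have hDA : X.Xset g (u - eS ({0,1} : Finset (Fin 2)))
      ⊆ X.Xset g (u - eS ({0} : Finset (Fin 2))) :=
    X.Xset_mono g (sub_le_sub_left (eS_mono (by decide)) u)
  have hDB : X.Xset g (u - eS ({0,1} : Finset (Fin 2)))
      ⊆ X.Xset g (u - eS ({1} : Finset (Fin 2))) :=
    X.Xset_mono g (sub_le_sub_left (eS_mono (by decide)) u)
  have hDΩ : X.Xset g (u - eS ({0,1} : Finset (Fin 2))) ⊆ X.Xset g u := hDA.trans hAΩ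
  -- the two set identities
  have h0e : eS ({0} : Finset (Fin 2)) = eb 0 := by funext i; simp [eS]
  have h1e : eS ({1} : Finset (Fin 2)) = eb 1 := by funext i; simp [eS]
  have hsetU : X.Uset g u = X.Xset g (u - eS ({0} : Finset (Fin 2)))
      ∪ X.Xset g (u - eS ({1} : Finset (Fin 2))) := by
    rw [h0e, h1e]
    ext c
    simp only [CellComplex.Uset, Set.mem_iUnion, Set.mem_union]
    constructor
    · rintro ⟨j, hj⟩
      rcases (by decide : ∀ j : Fin 2, j = 0 ∨ j = 1) j with rfl | rfl
      · exact Or.inl hj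
      · exact Or.inr hj
    · rintro (h | h)
      exacts [⟨0, h⟩, ⟨1, h⟩]
  have hsetD : X.Xset g (u - eS ({0,1} : Finset (Fin 2)))
      = X.Xset g (u - eS ({0} : Finset (Fin 2)))
        ∩ X.Xset g (u - eS ({1} : Finset (Fin 2))) := by
    have v1 : eS ({0} : Finset (Fin 2)) 0 = 1 := by decide
    have v4 : eS ({1} : Finset (Fin 2)) 1 = 1 := by decide
    have v5 : eS ({0,1} : Finset (Fin 2)) 0 = 1 := by decide
    have v6 : eS ({0,1} : Finset (Fin 2)) 1 = 1 := by decide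
    ext c
    constructor
    · intro hc
      exact ⟨hDA hc, hDB hc⟩
    · rintro ⟨hA, hB⟩
      intro i
      have hAi := hA i
      have hBi := hB i
      rcases (by decide : ∀ j : Fin 2, j = 0 ∨ j = 1) i with rfl | rfl
      · rw [Pi.sub_apply, v5]
        rw [Pi.sub_apply, v1] at hAi
        exact hAi
      · rw [Pi.sub_apply, v6]
        rw [Pi.sub_apply, v4] at hBi
        exact hBi
  -- Mayer–Vietoris side
  have E1 := X.Hd_eq (X.Xset g u) (X.Uset g u) (X.Uset_subset_Xset g u)
    (X.Uset_faceClosed g hg u) (q : ℤ)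
  rw [hsetU] at E1
  have hHdU : X.Hd (X.Uset g u) (q : ℤ)
      = X.Hd (X.Xset g (u - eS ({0} : Finset (Fin 2)))
          ∪ X.Xset g (u - eS ({1} : Finset (Fin 2)))) (q : ℤ) := by rw [hsetU]
  have E2 := X.MV_Z (X.Xset g u) (X.Xset g (u - eS ({0} : Finset (Fin 2))))
    (X.Xset g (u - eS ({1} : Finset (Fin 2)))) (q : ℤ)
  rw [← hsetD] at E2
  have E3 := X.MV_B (X.Xset g u) (X.Xset g (u - eS ({0} : Finset (Fin 2))))
    (X.Xset g (u - eS ({1} : Finset (Fin 2)))) ((q : ℤ) + 1) (q : ℤ)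
  have E4a := X.Hd_eq (X.Xset g u) (X.Xset g (u - eS ({0} : Finset (Fin 2)))) hAΩ hfcA (q : ℤ)
  have E4b := X.Hd_eq (X.Xset g u) (X.Xset g (u - eS ({1} : Finset (Fin 2)))) hBΩ hfcB (q : ℤ)
  have E4d := X.Hd_eq (X.Xset g u) (X.Xset g (u - eS ({0,1} : Finset (Fin 2)))) hDΩ hfcD (q : ℤ)
  have E5 := X.ker_Hmap_inter (X.Xset g u) (X.Xset g (u - eS ({0,1} : Finset (Fin 2))))
    (X.Xset g (u - eS ({0} : Finset (Fin 2)))) (X.Xset g (u - eS ({1} : Finset (Fin 2))))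
    hfcΩ hfcD hfcA hfcB hDA hDB hAΩ hBΩ hsetD (q : ℤ) ((q : ℤ) + 1) rfl
  have E5' := X.ker_Hmap_inter (X.Xset g u) (X.Xset g (u - eS ({0,1} : Finset (Fin 2))))
    (X.Xset g (u - eS ({0} : Finset (Fin 2)))) (X.Xset g (u - eS ({1} : Finset (Fin 2))))
    hfcΩ hfcD hfcA hfcB hDA hDB hAΩ hBΩ hsetD ((q : ℤ) - 1) (q : ℤ) (by ring)
  -- Koszul side : ξ₀
  have hxi0 : X.xi g hg 0 (q : ℤ) u
      + Module.finrank F ↥(LinearMap.range (X.KD g hg (q : ℤ) u (((0:ℕ):ℤ)+1) ((0:ℕ):ℤ)))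
      = Module.finrank F (X.Ksp g (q : ℤ) u ((0:ℕ):ℤ)) := by
    haveI : Subsingleton (X.Ksp g (q : ℤ) u (((0:ℕ):ℤ) - 1)) :=
      X.Ksp_subsingleton g u (q : ℤ) (((0:ℕ):ℤ) - 1) (Or.inl (by norm_num))
    exact finrank_hquot_ker_top _ _
  have hrn1 := LinearMap.finrank_range_add_finrank_ker
    (X.KD g hg (q : ℤ) u (((0:ℕ):ℤ)+1) ((0:ℕ):ℤ))
  have hk0 := X.finrank_Ksp_zero g hg u (q : ℤ) ((0:ℕ):ℤ) (by norm_num)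
  have hk1 := X.finrank_Ksp_one g hg u (q : ℤ) (((0:ℕ):ℤ)+1) (by norm_num)
  have hcong1 := X.KD_congr g hg u (q : ℤ) ((1:ℕ):ℤ) (((0:ℕ):ℤ)+1)
    (((1:ℕ):ℤ)-1) ((0:ℕ):ℤ) (by norm_num) (by norm_num)
  -- ξ₁
  have hxi1 : X.xi g hg 1 (q : ℤ) u
      + Module.finrank F ↥(LinearMap.range (X.KD g hg (q : ℤ) u (((1:ℕ):ℤ)+1) ((1:ℕ):ℤ))
          ⊓ LinearMap.ker (X.KD g hg (q : ℤ) u ((1:ℕ):ℤ) (((1:ℕ):ℤ)-1)))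
      = Module.finrank F ↥(LinearMap.ker (X.KD g hg (q : ℤ) u ((1:ℕ):ℤ) (((1:ℕ):ℤ)-1))) :=
    finrank_hquot _ _
  have hle1 : LinearMap.range (X.KD g hg (q : ℤ) u (((1:ℕ):ℤ)+1) ((1:ℕ):ℤ))
      ≤ LinearMap.ker (X.KD g hg (q : ℤ) u ((1:ℕ):ℤ) (((1:ℕ):ℤ)-1)) := by
    rintro x ⟨f, rfl⟩
    exact X.d1_d2_zero g hg u (q : ℤ) (((1:ℕ):ℤ)+1) ((1:ℕ):ℤ) (((1:ℕ):ℤ)-1)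
      (by norm_num) (by norm_num) (by norm_num) f
  rw [inf_eq_left.2 hle1] at hxi1
  have hrn2 := LinearMap.finrank_range_add_finrank_ker
    (X.KD g hg (q : ℤ) u (((1:ℕ):ℤ)+1) ((1:ℕ):ℤ))
  have hk2 := X.finrank_Ksp_two g hg u (q : ℤ) (((1:ℕ):ℤ)+1) (by norm_num)
  have hkerd2 := X.finrank_ker_d2 g hg u (q : ℤ) (((1:ℕ):ℤ)+1) ((1:ℕ):ℤ)
    (by norm_num) (by norm_num) hDA hDB
  -- ξ₂ at q-1
  have hxi2 : X.xi g hg 2 ((q : ℤ) - 1) u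
      = Module.finrank F
          ↥(LinearMap.ker (X.KD g hg ((q : ℤ) - 1) u ((2:ℕ):ℤ) (((2:ℕ):ℤ)-1))) := by
    haveI : Subsingleton (X.Ksp g ((q : ℤ) - 1) u (((2:ℕ):ℤ) + 1)) :=
      X.Ksp_subsingleton g u ((q : ℤ) - 1) (((2:ℕ):ℤ) + 1) (Or.inr (by norm_num))
    exact finrank_hquot_range_bot _ _
  have hkerd2' := X.finrank_ker_d2 g hg u ((q : ℤ) - 1) ((2:ℕ):ℤ) (((2:ℕ):ℤ)-1)
    (by norm_num) (by norm_num) hDA hDB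
  omega
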